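/- Let μ be an infinite cardinal and X a Hausdorff (T2) μ-sequential topological space. Then for every nonempty set A ⊆ X, the cardinality of the closure of A is at most (#A)^μ. -/

import Mathlib

open Cardinal Set Filter Topology

universe u

section Aux

variable {X : Type u} [TopologicalSpace X]

/-- Points that are limits of transfinite families of length a limit ordinal of
cardinality at most `μ` with values in `S`. -/
def MuLim (μ : Cardinal.{u}) (S : Set X) : Set X :=
  {p | ∃ η : Ordinal.{u}, Order.IsSuccLimit η ∧ η.card ≤ μ ∧
    ∃ x : η.ToType → X, (∀ i, x i ∈ S) ∧
      ∀ U ∈ 𝓝 p, ∃ b, ∀ i, b ≤ i → x i ∈ U}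

lemma muLim_mono {μ : Cardinal.{u}} {S T : Set X} (h : S ⊆ T) : MuLim μ S ⊆ MuLim μ T := by
  rintro p ⟨η, h1, h2, x, hx, hconv⟩
  exact ⟨η, h1, h2, x, fun i => h (hx i), hconv⟩

lemma muLim_unique [T2Space X] {η : Ordinal.{u}} (hη : η ≠ 0) {x : η.ToType → X} {p q : X}
    (hp : ∀ U ∈ 𝓝 p, ∃ b, ∀ i, b ≤ i → x i ∈ U)
    (hq : ∀ U ∈ 𝓝 q, ∃ b, ∀ i, b ≤ i → x i ∈ U) : p = q := by
  by_contra hne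
  obtain ⟨U, V, hU, hV, hpU, hqV, hUV⟩ := t2_separation hne
  obtain ⟨b₁, h₁⟩ := hp U (hU.mem_nhds hpU)
  obtain ⟨b₂, h₂⟩ := hq V (hV.mem_nhds hqV)
  have : Nonempty η.ToType := Ordinal.toType_nonempty_iff_ne_zero.2 hη
  exact Set.disjoint_left.mp hUV (h₁ _ (le_max_left b₁ b₂)) (h₂ _ (le_max_right b₁ b₂))

end Aux

section Aux2

variable {X : Type u} [TopologicalSpace X]

noncomputable def clIter (μ : Cardinal.{u}) (A : Set X) : Ordinal.{u} → Set X
  | α => A ∪ MuLim μ (⋃ β, ⋃ (_ : β < α), clIter μ A β)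
  termination_by α => α
  decreasing_by assumption

lemma clIter_eq (μ : Cardinal.{u}) (A : Set X) (α : Ordinal.{u}) :
    clIter μ A α = A ∪ MuLim μ (⋃ β < α, clIter μ A β) := by
  rw [clIter]

lemma subset_clIter (μ : Cardinal.{u}) (A : Set X) (α : Ordinal.{u}) : A ⊆ clIter μ A α := by
  rw [clIter_eq]; exact Set.subset_union_left

lemma clIter_mono (μ : Cardinal.{u}) (A : Set X) {α α' : Ordinal.{u}} (h : α ≤ α') :
    clIter μ A α ⊆ clIter μ A α' := by
  rw [clIter_eq, clIter_eq]
  exact Set.union_subset_union_right _ (muLim_mono (Set.iUnion₂_mono' fun β hβ => ⟨β, hβ.trans_le h, subset_rfl⟩))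

end Aux2
section Aux3

variable {X : Type u} [TopologicalSpace X]

lemma mk_muLim_le [T2Space X] {μ κ : Cardinal.{u}} (hκ : κ ≠ 0) {S : Set X} (hS : #S ≤ κ) :
    #(MuLim μ S) ≤ Order.succ μ * κ ^ μ := by
  classical
  set ι := (Set.Iio (Order.succ μ).ord : Set Ordinal.{u})
  set W := Σ η : ι, ((η : Ordinal.{u}).ToType → S)
  set L : W → Set X := fun w =>
    {p | ∀ U ∈ 𝓝 p, ∃ b, ∀ i, b ≤ i → ((w.2 i : X)) ∈ U} with hL
  have hsub : MuLim μ S ⊆ ⋃ w : W, L w := by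
    rintro p ⟨η, hlim, hcard, x, hx, hconv⟩
    have hη : η ∈ ι := by
      simp only [ι, Set.mem_Iio, Cardinal.lt_ord]
      exact hcard.trans_lt (Order.lt_succ μ)
    exact Set.mem_iUnion.2 ⟨⟨⟨η, hη⟩, fun i => ⟨x i, hx i⟩⟩, hconv⟩
  have hone : ∀ w : W, #(L w) ≤ 1 := by
    intro w
    rw [Cardinal.mk_le_one_iff_set_subsingleton]
    intro p hp q hq
    rcases eq_or_ne (w.1 : Ordinal.{u}) 0 with h0 | h0
    · obtain ⟨b, -⟩ := hp Set.univ Filter.univ_mem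
      have : Nonempty (w.1 : Ordinal.{u}).ToType := ⟨b⟩
      rw [Ordinal.toType_nonempty_iff_ne_zero] at this
      exact absurd h0 this
    · exact muLim_unique h0 hp hq
  have h1 : Cardinal.lift.{u+1} #(MuLim μ S) ≤ #W := by
    calc Cardinal.lift.{u+1} #(MuLim μ S) ≤ Cardinal.lift.{u+1} #(⋃ w : W, L w) :=
          Cardinal.lift_le.2 (Cardinal.mk_le_mk_of_subset hsub)
      _ ≤ Cardinal.lift.{u,u+1} #W * ⨆ w : W, Cardinal.lift.{u+1} #(L w) := Cardinal.mk_iUnion_le_lift L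
      _ = #W * ⨆ w : W, Cardinal.lift.{u+1} #(L w) := by rw [Cardinal.lift_id'.{u, u+1}]
      _ ≤ #W * 1 := by
          refine mul_le_mul' le_rfl (ciSup_le' fun w => ?_)
          exact (Cardinal.lift_le.{u+1}.2 (hone w)).trans_eq Cardinal.lift_one
      _ = #W := mul_one _
  have h2 : #W ≤ Cardinal.lift.{u+1} (Order.succ μ * κ ^ μ) := by
    have hterm : ∀ η : ι, #((η : Ordinal.{u}).ToType → S) ≤ κ ^ μ := by
      intro η
      have hcard : (η : Ordinal.{u}).card ≤ μ := by
        have := η.2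
        simp only [ι, Set.mem_Iio, Cardinal.lt_ord] at this
        exact Order.lt_succ_iff.1 this
      calc #((η : Ordinal.{u}).ToType → S) = #S ^ (η : Ordinal.{u}).card := by
            rw [← Cardinal.power_def, Cardinal.mk_toType]
        _ ≤ κ ^ (η : Ordinal.{u}).card := Cardinal.power_le_power_right hS
        _ ≤ κ ^ μ := Cardinal.power_le_power_left hκ hcard
    calc #W = Cardinal.sum (fun η : ι => #((η : Ordinal.{u}).ToType → S)) := Cardinal.mk_sigma _
      _ ≤ Cardinal.sum (fun _ : ι => κ ^ μ) := Cardinal.sum_le_sum _ _ hterm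
      _ = Cardinal.lift.{u} #ι * Cardinal.lift.{u+1} (κ ^ μ) := Cardinal.sum_const _ _
      _ ≤ Cardinal.lift.{u+1} (Order.succ μ) * Cardinal.lift.{u+1} (κ ^ μ) := by
          have : #ι = Cardinal.lift.{u+1} (Order.succ μ) := by
            rw [show #ι = Cardinal.lift.{u+1} ((Order.succ μ).ord.card) from
              Ordinal.mk_Iio_ordinal _, Cardinal.card_ord]
          rw [this]
          simp [Cardinal.lift_lift]
      _ = Cardinal.lift.{u+1} (Order.succ μ * κ ^ μ) := (Cardinal.lift_mul _ _).symm
  have := h1.trans h2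
  rwa [Cardinal.lift_le] at this

end Aux3

/-- A space is `μ`-sequential if for every non-closed set `A` there are a limit ordinal
`η` of cardinality at most `μ`, a transfinite family of points of `A` indexed by the
ordinals below `η`, and a point `p ∉ A` to which this family converges, i.e. every
neighborhood of `p` contains a final segment of the family. -/
def MuSequential (μ : Cardinal.{u}) (X : Type u) [TopologicalSpace X] : Prop :=
  ∀ A : Set X, ¬ IsClosed A →
    ∃ (η : Ordinal.{u}), Order.IsSuccLimit η ∧ η.card ≤ μ ∧
      ∃ (x : Set.Iio η → X) (p : X), p ∉ A ∧ (∀ α, x α ∈ A) ∧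
        ∀ U ∈ 𝓝 p, ∃ β : Set.Iio η, ∀ α : Set.Iio η,
          (β : Ordinal) ≤ (α : Ordinal) → x α ∈ U

theorem muSequential_closure_card_le
    {X : Type u} [TopologicalSpace X] [T2Space X] (μ : Cardinal.{u})
    (hμ : ℵ₀ ≤ μ) (hseq : MuSequential μ X) :
    ∀ A : Set X, A.Nonempty → #(closure A) ≤ #A ^ μ := by
  intro A hA
  by_cases hnt : A.Nontrivial
  case neg =>
    -- `A` is a nonempty subsingleton, hence a closed singleton
    obtain ⟨a, ha⟩ := hA
    have hsub : A.Subsingleton := Set.not_nontrivial_iff.1 hnt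
    have hAa : A = {a} := hsub.eq_singleton_of_mem ha
    rw [hAa, closure_singleton]
    simp

  case pos =>
    have h2 : (2 : Cardinal.{u}) ≤ #A := by
      obtain ⟨x, hx, y, hy, hxy⟩ := hnt
      refine Cardinal.two_le_iff.2 ⟨⟨x, hx⟩, ⟨y, hy⟩, ?_⟩
      simp [Subtype.ext_iff, hxy]
    set κ := #A ^ μ with hκdef
    have hA0 : #A ≠ 0 := Cardinal.mk_ne_zero_iff.2 hA.to_subtype
    have hκ0 : κ ≠ 0 := Cardinal.power_ne_zero μ hA0
    have hμκ : μ < κ := lt_of_lt_of_le (Cardinal.cantor μ) (Cardinal.power_le_power_right h2)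
    have hsuccκ : Order.succ μ ≤ κ := Order.succ_le_of_lt hμκ
    have hκinf : ℵ₀ ≤ κ := hμ.trans hμκ.le
    have hκμ : κ ^ μ = κ := by
      rw [hκdef, ← Cardinal.power_mul, Cardinal.mul_eq_self hμ]
    have hAκ : #A ≤ κ := Cardinal.self_le_power _ (Cardinal.one_le_aleph0.trans hμ)
    set o := (Order.succ μ).ord with ho
    have hcof : o.cof = Order.succ μ := (Cardinal.isRegular_succ hμ).cof_eq
    have hstage : ∀ α : Ordinal.{u}, α ≤ o → #(clIter μ A α) ≤ κ := by
      intro α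
      induction α using Ordinal.induction with
      | h α IH =>
        intro hα
        rw [clIter_eq]
        have hU : #(⋃ β < α, clIter μ A β) ≤ κ := by
          refine Cardinal.mk_iUnion_Ordinal_le_of_le ?_ hκinf _
            (fun β hβ => IH β hβ (hβ.le.trans hα))
          calc α.card ≤ o.card := Ordinal.card_le_card hα
            _ = Order.succ μ := Cardinal.card_ord _
            _ ≤ κ := hsuccκ
        calc #(A ∪ MuLim μ (⋃ β < α, clIter μ A β) : Set X)
            ≤ #A + #(MuLim μ (⋃ β < α, clIter μ A β)) := Cardinal.mk_union_le _ _
          _ ≤ κ + Order.succ μ * κ ^ μ := add_le_add hAκ (mk_muLim_le hκ0 hU)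
          _ ≤ κ + κ * κ := add_le_add le_rfl (mul_le_mul' hsuccκ hκμ.le)
          _ = κ := by rw [Cardinal.mul_eq_self hκinf, Cardinal.add_eq_self hκinf]
    set B := ⋃ β < o, clIter μ A β with hB
    have hBκ : #B ≤ κ := Cardinal.mk_iUnion_Ordinal_le_of_le
      (by rw [Cardinal.card_ord]; exact hsuccκ) hκinf _ (fun β hβ => hstage β hβ.le)
    have hstageB : ∀ β < o, clIter μ A β ⊆ B := fun β hβ =>
      Set.subset_iUnion₂ (s := fun β _ => clIter μ A β) β hβ
    have ho0 : 0 < o := by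
      rw [ho, Cardinal.lt_ord, Ordinal.card_zero]
      exact (Cardinal.aleph0_pos.trans_le hμ).trans_le (Order.le_succ μ)
    have hAB : A ⊆ B := (subset_clIter μ A 0).trans (hstageB 0 ho0)
    have holim : Order.IsSuccLimit o := Cardinal.isSuccLimit_ord (hμ.trans (Order.le_succ μ))
    have hclosed : IsClosed B := by
      by_contra hBc
      obtain ⟨η, hlim, hcard, x, p, hpB, hxB, hconv⟩ := hseq B hBc
      set e := (Ordinal.ToType.mk (o := η)) with he
      set y : η.ToType → X := fun i => x (e.symm i) with hy
      have hcof' : #η.ToType < o.cof := by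
        rw [Cardinal.mk_toType, hcof]
        exact hcard.trans_lt (Order.lt_succ μ)
      have hyB : ∀ i, ∃ β, β < o ∧ y i ∈ clIter μ A β := by
        intro i
        obtain ⟨β, hβ, hmem⟩ := Set.mem_iUnion₂.1 (hxB (e.symm i))
        exact ⟨β, hβ, hmem⟩
      choose g hg1 hg2 using hyB
      have hγ : (⨆ i, g i) < o := Ordinal.iSup_lt_ord hcof' hg1
      have hyγ : ∀ i, y i ∈ clIter μ A (⨆ i, g i) :=
        fun i => clIter_mono μ A (Ordinal.le_iSup g i) (hg2 i)
      have hpstage : p ∈ clIter μ A ((⨆ i, g i) + 1) := by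
        rw [clIter_eq]
        refine Or.inr ⟨η, hlim, hcard, y, fun i => ?_, fun U hU => ?_⟩
        · exact Set.mem_iUnion₂.2 ⟨_, Order.lt_succ _, hyγ i⟩
        · obtain ⟨β, hβ⟩ := hconv U hU
          refine ⟨e β, fun i hi => ?_⟩
          have h1 : (β : Set.Iio η) ≤ e.symm i := by
            have := e.symm.monotone hi
            rwa [OrderIso.symm_apply_apply] at this
          exact hβ (e.symm i) h1
      exact hpB (hstageB _ (holim.succ_lt hγ) hpstage)
    exact (Cardinal.mk_le_mk_of_subset (closure_minimal hAB hclosed)).trans hBκ
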